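/- arXiv:1811.06845 — 5 statements merged into one kernel-verified Lean document; each statement's English description precedes it below -/
import Mathlib

section
/- Let X be a random variable on ℝ with distribution P satisfying P = (1/3)(P∘S₁⁻¹ + P∘S₂⁻¹ + P∘S₃⁻¹), where Sⱼ(x) = r·x + ((j−1)/2)(1−r) for 0 < r < 1/3. Then Var(X) = (1−r)/(6(r+1)). -/
open MeasureTheory
open scoped ENNReal

open Filter

/-- The similarity mappings `S_j(x) = r x + ((j-1)/2)(1-r)`, indexed by `j : Fin 3`
(so `j = 0, 1, 2` corresponds to `j = 1, 2, 3` in the paper). -/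
noncomputable def Smap (r : ℝ) (j : Fin 3) (x : ℝ) : ℝ := r * x + (j : ℝ) / 2 * (1 - r)

theorem stmt_1 (r : ℝ) (hr0 : 0 < r) (hr1 : r < 1/3)
    (P : Measure ℝ) [IsProbabilityMeasure P]
    (hP : P = (3 : ℝ≥0∞)⁻¹ •
      (P.map (Smap r 0) + P.map (Smap r 1) + P.map (Smap r 2))) :
    ProbabilityTheory.variance (fun x => x) P = (1 - r) / (6 * (r + 1)) := by
  have hr1' : r < 1 := by linarith
  have h1r : (0:ℝ) < 1 - r := by linarith
  have hSm : ∀ j : Fin 3, Measurable (Smap r j) := fun j =>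
    (measurable_id.const_mul r).add_const _
  set g : ℝ → ℝ≥0∞ := fun R => P {x | R < |x|} with hg
  have hgmeas : ∀ R : ℝ, MeasurableSet {x : ℝ | R < |x|} := fun R =>
    measurableSet_lt measurable_const measurable_abs
  have hganti : ∀ {R S : ℝ}, R ≤ S → g S ≤ g R := fun h =>
    measure_mono (fun x hx => lt_of_le_of_lt h hx)
  -- key contraction step
  have key : ∀ R : ℝ, 1 ≤ R → g R ≤ g ((R - 1) / r) := by
    intro R hR
    have hsub : ∀ j : Fin 3, {x : ℝ | R < |Smap r j x|} ⊆ {x : ℝ | (R-1)/r < |x|} := by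
      intro j x hx
      simp only [Set.mem_setOf_eq] at hx ⊢
      have hj2 : (j:ℝ) ≤ 2 := by
        have := j.isLt
        have : (j:ℕ) ≤ 2 := by omega
        exact_mod_cast this
      have hj0 : (0:ℝ) ≤ (j:ℝ) := by positivity
      have hb0 : (0:ℝ) ≤ (j:ℝ)/2*(1-r) := by positivity
      have hb1 : (j:ℝ)/2*(1-r) ≤ 1 := by nlinarith
      have habs : |Smap r j x| ≤ r * |x| + 1 := by
        unfold Smap
        calc |r * x + (j:ℝ)/2*(1-r)| ≤ |r*x| + |(j:ℝ)/2*(1-r)| := abs_add_le _ _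
          _ ≤ r * |x| + 1 := by
              rw [abs_mul, abs_of_nonneg hr0.le, abs_of_nonneg hb0]
              linarith
      rw [div_lt_iff₀ hr0]
      nlinarith [abs_nonneg x]
    have hrw : P {x | R < |x|} = (3:ℝ≥0∞)⁻¹ * (P {x | R < |Smap r 0 x|}
        + P {x | R < |Smap r 1 x|} + P {x | R < |Smap r 2 x|}) := by
      conv_lhs => rw [hP]
      rw [Measure.smul_apply, Measure.coe_add, Measure.coe_add, Pi.add_apply, Pi.add_apply,
        Measure.map_apply (hSm 0) (hgmeas R), Measure.map_apply (hSm 1) (hgmeas R),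
        Measure.map_apply (hSm 2) (hgmeas R)]
      rfl
    have hb : ∀ j : Fin 3, P {x | R < |Smap r j x|} ≤ g ((R-1)/r) := fun j =>
      measure_mono (hsub j)
    calc g R = (3:ℝ≥0∞)⁻¹ * (P {x | R < |Smap r 0 x|}
        + P {x | R < |Smap r 1 x|} + P {x | R < |Smap r 2 x|}) := hrw
      _ ≤ (3:ℝ≥0∞)⁻¹ * (g ((R-1)/r) + g ((R-1)/r) + g ((R-1)/r)) := by
          gcongr <;> exact hb _
      _ = g ((R-1)/r) := by
          have h3 : g ((R-1)/r) + g ((R-1)/r) + g ((R-1)/r) = 3 * g ((R-1)/r) := by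
            ring
          rw [h3, ← mul_assoc, ENNReal.inv_mul_cancel (by norm_num) (by norm_num), one_mul]
  set R0 : ℝ := 2 / (1 - r) with hR0def
  have hR0 : 1 ≤ R0 := by rw [le_div_iff₀ h1r]; linarith
  set φ : ℝ → ℝ := fun R => (R - 1)/r with hφ
  have iter : ∀ n : ℕ, R0 + n ≤ φ^[n] R0 ∧ g R0 ≤ g (φ^[n] R0) := by
    intro n
    induction n with
    | zero => simp
    | succ n ih =>
      obtain ⟨h1, h2⟩ := ih
      have hRge : R0 ≤ φ^[n] R0 := by
        have : (0:ℝ) ≤ n := Nat.cast_nonneg n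
        linarith
      have hstep : φ^[n] R0 + 1 ≤ φ (φ^[n] R0) := by
        have hR2 : 2 ≤ φ^[n] R0 * (1 - r) := by
          rw [hR0def] at hRge
          calc (2:ℝ) = 2 / (1-r) * (1-r) := by field_simp
            _ ≤ φ^[n] R0 * (1 - r) := by gcongr
        simp only [hφ]
        rw [le_div_iff₀ hr0]
        nlinarith
      constructor
      · rw [Function.iterate_succ_apply']
        push_cast
        linarith
      · rw [Function.iterate_succ_apply']
        refine h2.trans ?_
        have h1le : 1 ≤ φ^[n] R0 := le_trans hR0 hRge
        exact key _ h1le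
  have htend : Tendsto (fun n : ℕ => g (n : ℝ)) atTop (nhds 0) := by
    have h0 : (⋂ n : ℕ, {x : ℝ | (n:ℝ) < |x|}) = ∅ := by
      ext x
      simp only [Set.mem_iInter, Set.mem_setOf_eq, Set.mem_empty_iff_false, iff_false]
      push_neg
      obtain ⟨n, hn⟩ := exists_nat_gt |x|
      exact ⟨n, hn.le⟩
    have := tendsto_measure_iInter_atTop (μ := P) (s := fun n : ℕ => {x | (n:ℝ) < |x|})
      (fun n => (hgmeas _).nullMeasurableSet)
      (by
        intro m n hmn x hx
        simp only [Set.mem_setOf_eq] at hx ⊢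
        exact lt_of_le_of_lt (by exact_mod_cast hmn) hx)
      ⟨0, measure_ne_top P _⟩
    rw [h0] at this
    simpa [hg, Function.comp_def] using this
  have hg0 : g R0 = 0 := by
    have hle : ∀ n : ℕ, g R0 ≤ g (n:ℝ) := by
      intro n
      refine le_trans (iter n).2 (hganti ?_)
      have h1 := (iter n).1
      have : (0:ℝ) ≤ R0 := by linarith
      linarith
    exact le_antisymm (ge_of_tendsto' htend hle) bot_le
  have hae : ∀ᵐ x ∂P, |x| ≤ R0 := by
    rw [ae_iff]
    have : {x : ℝ | ¬ |x| ≤ R0} = {x : ℝ | R0 < |x|} := by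
      ext x; simp [not_le]
    rw [this]
    exact hg0
  have hmx : AEStronglyMeasurable (fun x : ℝ => x) P := aestronglyMeasurable_id
  have hix : Integrable (fun x : ℝ => x) P :=
    Integrable.mono' (integrable_const R0) hmx (hae.mono fun x h => by simpa using h)
  have hix2 : Integrable (fun x : ℝ => x^2) P :=
    Integrable.mono' (integrable_const (R0^2))
      ((measurable_id.pow_const 2).aestronglyMeasurable)
      (hae.mono fun x h => by
        rw [Real.norm_eq_abs, abs_pow]
        exact pow_le_pow_left₀ (abs_nonneg x) h 2)
  -- moment transfer
  have hmom : ∀ f : ℝ → ℝ, Measurable f → Integrable f P →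
      ∫ x, f x ∂P = (1/3) * ((∫ x, f (Smap r 0 x) ∂P) + (∫ x, f (Smap r 1 x) ∂P)
        + (∫ x, f (Smap r 2 x) ∂P)) := by
    intro f hfm hfi
    have hfi' : Integrable f ((3:ℝ≥0∞)⁻¹ •
        (P.map (Smap r 0) + P.map (Smap r 1) + P.map (Smap r 2))) := hP ▸ hfi
    rw [integrable_smul_measure (by norm_num) (by norm_num)] at hfi'
    have h012 := integrable_add_measure.mp hfi'
    have h01 := integrable_add_measure.mp h012.1
    conv_lhs => rw [hP]
    rw [integral_smul_measure, integral_add_measure h012.1 h012.2,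
      integral_add_measure h01.1 h01.2,
      integral_map (hSm 0).aemeasurable hfm.aestronglyMeasurable,
      integral_map (hSm 1).aemeasurable hfm.aestronglyMeasurable,
      integral_map (hSm 2).aemeasurable hfm.aestronglyMeasurable]
    rw [ENNReal.toReal_inv]
    norm_num
  have hS0 : ∀ x : ℝ, Smap r 0 x = r * x + 0 := by intro x; simp [Smap]
  have hS1 : ∀ x : ℝ, Smap r 1 x = r * x + (1-r)/2 := by
    intro x; simp [Smap]; ring
  have hS2 : ∀ x : ℝ, Smap r 2 x = r * x + (1-r) := by
    intro x
    show r * x + ((2 : Fin 3) : ℝ) / 2 * (1 - r) = r * x + (1 - r)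
    norm_num [Fin.val_two]
  set m1 := ∫ x, x ∂P with hm1def
  set m2 := ∫ x, x^2 ∂P with hm2def
  have hlin : ∀ c : ℝ, ∫ x, (r * x + c) ∂P = r * m1 + c := by
    intro c
    rw [integral_add (hix.const_mul r) (integrable_const c), integral_const_mul,
      integral_const]
    simp
    exact Or.inl rfl
  have hquad : ∀ c : ℝ, ∫ x, (r * x + c)^2 ∂P = r^2 * m2 + 2*r*c*m1 + c^2 := by
    intro c
    have hfun : (fun x : ℝ => (r*x+c)^2) = fun x => r^2 * x^2 + (2*r*c*x + c^2) := by
      funext x; ring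
    have hB : Integrable (fun x : ℝ => 2*r*c*x + c^2) P :=
      (hix.const_mul (2*r*c)).add (integrable_const _)
    rw [hfun, integral_add (hix2.const_mul _) hB,
      integral_add (hix.const_mul _) (integrable_const _), integral_const_mul,
      integral_const_mul, integral_const]
    simp
    ring
  have e1 : m1 = (1/3) * ((r*m1 + 0) + (r*m1 + (1-r)/2) + (r*m1 + (1-r))) := by
    have h := hmom (fun x => x) measurable_id hix
    simp only [hS0, hS1, hS2, hlin] at h
    exact h
  have e2 : m2 = (1/3) * ((r^2*m2 + 2*r*0*m1 + 0^2) + (r^2*m2 + 2*r*((1-r)/2)*m1 + ((1-r)/2)^2)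
      + (r^2*m2 + 2*r*(1-r)*m1 + (1-r)^2)) := by
    have h := hmom (fun x => x^2) (measurable_id.pow_const 2) hix2
    simp only [hS0, hS1, hS2, hquad] at h
    exact h
  have hm1 : m1 = 1/2 := by
    have h2 : (1-r) * m1 = (1-r) * (1/2) := by linear_combination e1
    exact mul_left_cancel₀ h1r.ne' h2
  have hm2 : m2 = (r+5)/(12*(r+1)) := by
    rw [hm1] at e2
    have hr1ne : (r:ℝ)+1 ≠ 0 := by positivity
    have h2 : (1-r) * ((r+1) * m2) = (1-r) * ((r+5)/12) := by linear_combination e2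
    have h3 : (r+1) * m2 = (r+5)/12 := mul_left_cancel₀ h1r.ne' h2
    field_simp
    linarith [h3]
  have hmem : MemLp (fun x : ℝ => x) 2 P :=
    (memLp_top_of_bound hmx R0 (hae.mono fun x h => by simpa using h)).mono_exponent
      le_top
  rw [ProbabilityTheory.variance_eq_sub hmem]
  have hpow : ((fun x : ℝ => x) ^ 2) = fun x : ℝ => x ^ 2 := by
    funext x; simp
  rw [hpow]
  rw [← hm2def, ← hm1def, hm1, hm2]
  have hr1ne : (r:ℝ)+1 ≠ 0 := by positivity
  field_simp
  ring
end

section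
/- Let P be the self-similar probability measure with P = (1/3)(P∘S₁⁻¹ + P∘S₂⁻¹ + P∘S₃⁻¹), Sⱼ(x) = r·x + ((j−1)/2)(1−r), 0 < r < 1/3. For every x₀ ∈ ℝ, ∫(x−x₀)² dP(x) = (1−r)/(6(r+1)) + (x₀ − 1/2)². -/
open MeasureTheory Filter Topology
open scoped ENNReal

set_option maxHeartbeats 1000000 in
theorem stmt_2 (r : ℝ) (hr0 : 0 < r) (hr1 : r < 1/3)
    (P : Measure ℝ) [IsProbabilityMeasure P]
    (hP : P = (3 : ℝ≥0∞)⁻¹ •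
      (P.map (Smap r 0) + P.map (Smap r 1) + P.map (Smap r 2))) :
    ∀ x₀ : ℝ, ∫ x, (x - x₀)^2 ∂P = (1 - r) / (6 * (r + 1)) + (x₀ - 1/2)^2 := by
  have hbd : ∀ᵐ x ∂P, |x - 1/2| ≤ 1 := by
    have hS : ∀ j : Fin 3, Measurable (Smap r j) := by
      intro j; unfold Smap; exact (measurable_id.const_mul r).add_const _
    set A : ℝ → Set ℝ := fun t => {x | t < |x - 1/2|} with hA
    have hAmeas : ∀ t, MeasurableSet (A t) := by
      intro t
      exact measurableSet_lt measurable_const ((measurable_id.add_const _).abs)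
    have hc : ∀ j : Fin 3, |r/2 + (j : ℝ)/2*(1-r) - 1/2| ≤ (1-r)/2 := by
      intro j
      fin_cases j <;> simp <;> rw [abs_le] <;> constructor <;> nlinarith
    have key : ∀ t : ℝ, 1 ≤ t → P (A t) ≤ P (A (t+1)) := by
      intro t ht
      have hsub : ∀ j : Fin 3, (Smap r j) ⁻¹' (A t) ⊆ A (t+1) := by
        intro j x hx
        simp only [hA, Set.mem_preimage, Set.mem_setOf_eq, Smap] at hx ⊢
        have h1 : r * x + (j:ℝ)/2*(1-r) - 1/2 = r*(x - 1/2) + (r/2 + (j:ℝ)/2*(1-r) - 1/2) := by ring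
        have h2 : |r * x + (j:ℝ)/2*(1-r) - 1/2| ≤ r * |x - 1/2| + (1-r)/2 := by
          rw [h1]
          calc |r*(x-1/2) + (r/2 + (j:ℝ)/2*(1-r) - 1/2)| ≤ |r*(x-1/2)| + |r/2 + (j:ℝ)/2*(1-r) - 1/2| := abs_add_le _ _
          _ ≤ r * |x - 1/2| + (1-r)/2 := by rw [abs_mul, abs_of_pos hr0]; exact add_le_add le_rfl (hc j)
        have h3 : t < r * |x - 1/2| + (1-r)/2 := lt_of_lt_of_le hx h2
        nlinarith [abs_nonneg (x - 1/2)]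
      have happ : P (A t) = 3⁻¹ * (P ((Smap r 0) ⁻¹' (A t)) + P ((Smap r 1) ⁻¹' (A t)) + P ((Smap r 2) ⁻¹' (A t))) := by
        conv_lhs => rw [hP]
        simp only [Measure.smul_apply, Measure.add_apply, smul_eq_mul]
        rw [Measure.map_apply (hS 0) (hAmeas t), Measure.map_apply (hS 1) (hAmeas t),
          Measure.map_apply (hS 2) (hAmeas t)]
      rw [happ]
      have hb : ∀ j : Fin 3, P ((Smap r j) ⁻¹' (A t)) ≤ P (A (t+1)) :=
        fun j => measure_mono (hsub j)
      calc (3 : ℝ≥0∞)⁻¹ * (P ((Smap r 0) ⁻¹' (A t)) + P ((Smap r 1) ⁻¹' (A t)) + P ((Smap r 2) ⁻¹' (A t)))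
          ≤ 3⁻¹ * (P (A (t+1)) + P (A (t+1)) + P (A (t+1))) := by
            gcongr <;> exact hsub _
        _ = P (A (t+1)) := by
            rw [show (P (A (t+1)) + P (A (t+1)) + P (A (t+1))) = 3 * P (A (t+1)) by ring,
              ← mul_assoc, ENNReal.inv_mul_cancel (by norm_num) (by norm_num), one_mul]
    have hchain : ∀ n : ℕ, P (A 1) ≤ P (A (1 + n)) := by
      intro n
      induction n with
      | zero => simp
      | succ k ih =>
        refine ih.trans ?_
        have := key (1 + k) (le_add_of_nonneg_right k.cast_nonneg)
        convert this using 3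
        · rfl
        push_cast; ring
    have hiInter : ⋂ n : ℕ, A (1 + n) = ∅ := by
      ext x
      simp only [Set.mem_iInter, Set.mem_empty_iff_false, iff_false, not_forall, hA, Set.mem_setOf_eq, not_lt]
      obtain ⟨n, hn⟩ := exists_nat_gt (|x - 1/2|)
      exact ⟨n, by linarith⟩
    have hlim : Tendsto (fun n : ℕ => P (A (1 + n))) atTop (𝓝 (P (⋂ n : ℕ, A (1 + n)))) :=
      tendsto_measure_iInter_atTop (fun n => (hAmeas _).nullMeasurableSet)
        (fun n m hnm => by
          apply Set.setOf_subset_setOf.mpr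
          intro x hx
          have hnm' : (n:ℝ) ≤ m := Nat.cast_le.mpr hnm
          have : (1 + (n:ℝ)) ≤ 1 + m := by linarith
          linarith)
        ⟨0, measure_ne_top _ _⟩
    rw [hiInter] at hlim
    simp only [measure_empty] at hlim
    have h0 : P (A 1) = 0 := by
      have := ge_of_tendsto' hlim hchain
      simpa using this
    rw [ae_iff]
    convert h0 using 2
    ext x; simp [hA, not_le]
  have hS : ∀ j : Fin 3, Measurable (Smap r j) := by
    intro j; unfold Smap; exact (measurable_id.const_mul r).add_const _
  -- generic integrability
  have hIntBdd : ∀ (g : ℝ → ℝ) (C : ℝ), Measurable g → (∀ x : ℝ, |x - 1/2| ≤ 1 → |g x| ≤ C) →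
      Integrable g P := by
    intro g C hg hC
    refine (integrable_const C).mono' hg.aestronglyMeasurable ?_
    filter_upwards [hbd] with x hx
    simpa [Real.norm_eq_abs] using hC x hx
  have hInt1 : Integrable (fun x : ℝ => x) P :=
    hIntBdd _ (3/2) measurable_id (fun x hx => by rw [abs_le] at hx ⊢; constructor <;> linarith [hx.1, hx.2])
  have hInt2 : Integrable (fun x : ℝ => x^2) P :=
    hIntBdd _ (9/4) (measurable_id.pow_const 2) (fun x hx => by
      rw [abs_le] at hx ⊢; constructor <;> nlinarith [hx.1, hx.2])
  -- transform lemma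
  have transform : ∀ f : ℝ → ℝ, Continuous f →
      (∀ j : Fin 3, Integrable (fun x => f (Smap r j x)) P) →
      ∫ x, f x ∂P = 3⁻¹ * (∫ x, f (Smap r 0 x) ∂P + ∫ x, f (Smap r 1 x) ∂P + ∫ x, f (Smap r 2 x) ∂P) := by
    intro f hf hint
    have hmi : ∀ j : Fin 3, Integrable f (P.map (Smap r j)) := fun j =>
      (integrable_map_measure (hf.aestronglyMeasurable) (hS j).aemeasurable).mpr (hint j)
    have hmap : ∀ j : Fin 3, ∫ x, f x ∂(P.map (Smap r j)) = ∫ x, f (Smap r j x) ∂P := fun j =>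
      integral_map (hS j).aemeasurable hf.aestronglyMeasurable
    conv_lhs => rw [hP]
    rw [integral_smul_measure, integral_add_measure ((hmi 0).add_measure (hmi 1)) (hmi 2),
      integral_add_measure (hmi 0) (hmi 1), hmap 0, hmap 1, hmap 2]
    simp [ENNReal.toReal_inv, smul_eq_mul]
  -- first moment
  have haff : ∀ c : ℝ, ∫ x, (r * x + c) ∂P = r * ∫ x, x ∂P + c := by
    intro c
    rw [integral_add (hInt1.const_mul r) (integrable_const c), integral_const_mul, integral_const]
    simp
  have hm1 : ∫ x, x ∂P = 1/2 := by
    have h := transform (fun x => x) continuous_id (fun j => by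
      simp only [Smap]
      exact (hInt1.const_mul r).add (integrable_const _))
    simp only [Smap] at h
    rw [haff, haff, haff] at h
    have h0 : ((0 : Fin 3) : ℝ) = 0 := by norm_num
    have h1 : ((1 : Fin 3) : ℝ) = 1 := by norm_num
    have h2 : ((2 : Fin 3) : ℝ) = 2 := by norm_num
    rw [h0, h1, h2] at h
    have hr : (1 : ℝ) - r ≠ 0 := by linarith
    have h' : (1 - r) * ((∫ x, x ∂P) - 1/2) = 0 := by
      field_simp at h; linarith
    rcases mul_eq_zero.mp h' with h'' | h''
    · exact absurd h'' hr
    · linarith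
  -- second moment
  have hsq : ∀ c : ℝ, ∫ x, (r * x + c)^2 ∂P = r^2 * ∫ x, x^2 ∂P + 2*r*c*(1/2) + c^2 := by
    intro c
    have hrw : ∀ x : ℝ, (r * x + c)^2 = r^2 * x^2 + (2*r*c) * x + c^2 := fun x => by ring
    simp_rw [hrw]
    have i1 : Integrable (fun x : ℝ => r^2 * x^2 + (2*r*c) * x) P :=
      (hInt2.const_mul (r^2)).add (hInt1.const_mul (2*r*c))
    rw [integral_add i1 (integrable_const _),
      integral_add (hInt2.const_mul (r^2)) (hInt1.const_mul (2*r*c)),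
      integral_const_mul, integral_const_mul, integral_const, hm1]
    simp
  have hm2 : ∫ x, x^2 ∂P = (r+5)/(12*(r+1)) := by
    have h := transform (fun x => x^2) (continuous_pow 2) (fun j => by
      simp only [Smap]
      have : Integrable (fun x : ℝ => r^2 * x^2 + (2*r*((j:ℝ)/2*(1-r))) * x + ((j:ℝ)/2*(1-r))^2) P :=
        ((hInt2.const_mul _).add (hInt1.const_mul _)).add (integrable_const _)
      exact this.congr (Filter.Eventually.of_forall fun x => by ring)
    )
    simp only [Smap] at h
    rw [hsq, hsq, hsq] at h
    have h0 : ((0 : Fin 3) : ℝ) = 0 := by norm_num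
    have h1 : ((1 : Fin 3) : ℝ) = 1 := by norm_num
    have h2 : ((2 : Fin 3) : ℝ) = 2 := by norm_num
    rw [h0, h1, h2] at h
    have hr : (1 : ℝ) - r ≠ 0 := by linarith
    have hr2 : (r : ℝ) + 1 ≠ 0 := by linarith
    have h' : (1 - r^2) * (∫ x, x^2 ∂P) = (1-r)*(r+5)/12 := by
      field_simp at h; linarith
    rw [eq_div_iff (by positivity : (12:ℝ)*(r+1) ≠ 0)]
    have := mul_left_cancel₀ hr (show (1-r) * ((∫ x, x^2 ∂P) * (12*(r+1))) = (1-r) * (r+5) by nlinarith [h'])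
    linarith [this]
  -- conclusion
  intro x₀
  have hrw : ∀ x : ℝ, (x - x₀)^2 = x^2 + (-(2*x₀)) * x + x₀^2 := fun x => by ring
  simp_rw [hrw]
  have i1 : Integrable (fun x : ℝ => x^2 + (-(2*x₀)) * x) P :=
    hInt2.add (hInt1.const_mul _)
  rw [integral_add i1 (integrable_const _),
    integral_add hInt2 (hInt1.const_mul _), integral_const_mul, integral_const, hm1, hm2]
  have hr2 : (r : ℝ) + 1 ≠ 0 := by linarith
  rw [probReal_univ]
  field_simp
  ring
end

section
/- Let P be the self-similar measure for Sⱼ(x) = r·x + ((j−1)/2)(1−r), j = 1,2,3, with weights 1/3, where 0 < r < 1/3, and let V = (1−r)/(6(r+1)). For any word σ ∈ {1,2,3}^k (k ≥ 1) and any x₀ ∈ ℝ, ∫_{J_σ} (x−x₀)² dP(x) = 3^{−k} ( r^{2k} V + (S_σ(1/2) − x₀)² ), where J_σ = S_σ([0,1]). -/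
open MeasureTheory Filter
open scoped ENNReal

/-- For a word `σ = σ₁ ⋯ σ_k` over the alphabet, the composition `S_σ = S_{σ₁} ∘ ⋯ ∘ S_{σ_k}`. -/
noncomputable def Sword (r : ℝ) {k : ℕ} (σ : Fin k → Fin 3) : ℝ → ℝ :=
  fun x => (List.ofFn σ).foldr (fun j y => Smap r j y) x

set_option linter.unusedSectionVars false
set_option linter.deprecated false

lemma Smap_meas (r : ℝ) (j : Fin 3) : Measurable (Smap r j) := by
  unfold Smap; fun_prop

lemma Smap_mem (r : ℝ) (hr0 : 0 < r) (hr1 : r < 1/3) (j : Fin 3) {x : ℝ}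
    (hx : x ∈ Set.Icc (0:ℝ) 1) : Smap r j x ∈ Set.Icc (0:ℝ) 1 := by
  have hj : (j : ℝ) ≤ 2 := by
    have h2 : (j : ℕ) ≤ 2 := Nat.lt_succ_iff.mp j.2
    exact_mod_cast h2
  have hj0 : (0:ℝ) ≤ (j : ℝ) := by positivity
  obtain ⟨h0, h1⟩ := hx
  constructor <;> unfold Smap <;> nlinarith

lemma supp_lemma (r : ℝ) (hr0 : 0 < r) (hr1 : r < 1/3)
    (P : Measure ℝ) [IsProbabilityMeasure P]
    (hP : P = (3 : ℝ≥0∞)⁻¹ •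
      (P.map (Smap r 0) + P.map (Smap r 1) + P.map (Smap r 2))) :
    ∀ᵐ x ∂P, x ∈ Set.Icc (0:ℝ) 1 := by
  set B : ℝ → Set ℝ := fun M => (Set.Icc (-M) (1+M))ᶜ with hB
  have step1 : ∀ M : ℝ, 0 ≤ M → P (B (r*M)) ≤ P (B M) := by
    intro M hM
    have hsub : ∀ j : Fin 3, (Smap r j) ⁻¹' (B (r*M)) ⊆ B M := by
      intro j x hx
      simp only [hB, Set.mem_compl_iff, Set.mem_preimage, Set.mem_Icc, not_and_or, not_le] at hx ⊢
      have hj : (j : ℝ) ≤ 2 := by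
        have h2 : (j : ℕ) ≤ 2 := Nat.lt_succ_iff.mp j.2
        exact_mod_cast h2
      have hj0 : (0:ℝ) ≤ (j : ℝ) := by positivity
      rcases hx with h | h
      · left; unfold Smap at h; nlinarith
      · right; unfold Smap at h; nlinarith
    have key : ∀ j : Fin 3, (P.map (Smap r j)) (B (r*M)) ≤ P (B M) := by
      intro j
      rw [Measure.map_apply (Smap_meas r j) (measurableSet_Icc.compl)]
      exact measure_mono (hsub j)
    calc P (B (r*M)) = (3 : ℝ≥0∞)⁻¹ *
          ((P.map (Smap r 0)) (B (r*M)) + (P.map (Smap r 1)) (B (r*M)) + (P.map (Smap r 2)) (B (r*M))) := by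
            conv_lhs => rw [hP]
            simp only [Measure.smul_apply, Measure.coe_add, Pi.add_apply, smul_eq_mul]
      _ ≤ (3 : ℝ≥0∞)⁻¹ * (P (B M) + P (B M) + P (B M)) := by
            exact mul_le_mul_right (add_le_add (add_le_add (key 0) (key 1)) (key 2)) _
      _ = P (B M) := by
            rw [show P (B M) + P (B M) + P (B M) = 3 * P (B M) by ring]
            rw [← mul_assoc, ENNReal.inv_mul_cancel (by norm_num) (by norm_num), one_mul]
  have step2 : ∀ (M : ℝ), 0 < M → ∀ n : ℕ, P (B M) ≤ P (B (M / r^n)) := by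
    intro M hM n
    induction n with
    | zero => simp
    | succ n ih =>
      refine ih.trans ?_
      have : M / r ^ n = r * (M / r ^ (n+1)) := by
        field_simp; ring
      rw [this]
      exact step1 _ (by positivity)
  have hBnull : ∀ M : ℝ, 0 < M → P (B M) = 0 := by
    intro M hM
    have hmono : Antitone (fun n : ℕ => B (M / r ^ n)) := by
      intro m n hmn
      have : M / r ^ m ≤ M / r ^ n := by
        apply div_le_div_of_nonneg_left hM.le (by positivity)
        exact pow_le_pow_of_le_one hr0.le (by linarith) hmn
      intro x hx
      simp only [hB, Set.mem_compl_iff, Set.mem_Icc, not_and_or, not_le] at hx ⊢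
      rcases hx with h | h
      · left; linarith
      · right; linarith
    have htop : Tendsto (fun n : ℕ => M / r ^ n) atTop atTop := by
      have h1 : Tendsto (fun n : ℕ => (r⁻¹) ^ n) atTop atTop :=
        tendsto_pow_atTop_atTop_of_one_lt (by rw [one_lt_inv_iff₀] <;> constructor <;> linarith)
      have : (fun n : ℕ => M / r ^ n) = fun n => M * (r⁻¹)^n := by
        funext n; rw [div_eq_mul_inv, inv_pow]
      rw [this]
      exact h1.const_mul_atTop hM
    have hempty : (⋂ n : ℕ, B (M / r ^ n)) = ∅ := by
      apply Set.eq_empty_iff_forall_notMem.mpr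
      intro x hx
      obtain ⟨n, hn⟩ := (htop.eventually_ge_atTop (max (-x) x)).exists
      have hx' := Set.mem_iInter.mp hx n
      simp only [hB, Set.mem_compl_iff, Set.mem_Icc, not_and_or, not_le] at hx'
      have h1 := le_max_left (-x) x
      have h2 := le_max_right (-x) x
      rcases hx' with h | h <;> linarith
    have hlim : Tendsto (fun n : ℕ => P (B (M / r ^ n))) atTop (nhds 0) := by
      have := MeasureTheory.tendsto_measure_iInter_atTop
        (μ := P) (s := fun n : ℕ => B (M / r ^ n))
        (fun n => (measurableSet_Icc.compl).nullMeasurableSet) hmono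
        ⟨0, measure_ne_top P _⟩
      rwa [hempty, measure_empty] at this
    have := ge_of_tendsto hlim (Eventually.of_forall (step2 M hM))
    exact le_antisymm this zero_le
  have hsub : (Set.Icc (0:ℝ) 1)ᶜ ⊆ ⋃ n : ℕ, B (1 / (n+1) : ℝ) := by
    intro x hx
    simp only [Set.mem_compl_iff, Set.mem_Icc, not_and_or, not_le] at hx
    simp only [Set.mem_iUnion, hB, Set.mem_compl_iff, Set.mem_Icc, not_and_or, not_le]
    rcases hx with h | h
    · obtain ⟨n, hn⟩ := exists_nat_one_div_lt (show (0:ℝ) < -x by linarith)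
      exact ⟨n, Or.inl (by push_cast at hn ⊢; linarith)⟩
    · obtain ⟨n, hn⟩ := exists_nat_one_div_lt (show (0:ℝ) < x - 1 by linarith)
      exact ⟨n, Or.inr (by push_cast at hn ⊢; linarith)⟩
  have : P ((Set.Icc (0:ℝ) 1)ᶜ) = 0 :=
    measure_mono_null hsub (measure_iUnion_null fun n => hBnull _ (by positivity))
  refine MeasureTheory.ae_iff.mpr ?_
  convert this using 2
  rfl

lemma foldr_affine (r : ℝ) (l : List (Fin 3)) (x : ℝ) :
    l.foldr (fun j y => Smap r j y) x
      = r ^ l.length * x + l.foldr (fun j y => Smap r j y) 0 := by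
  induction l generalizing x with
  | nil => simp
  | cons j l ih =>
    simp only [List.foldr_cons, List.length_cons]
    rw [ih x, ih 0]
    unfold Smap
    ring

lemma Smap_image (r : ℝ) (hr0 : 0 < r) (j : Fin 3) (A : Set ℝ) :
    Smap r j '' A = (fun x => (x - (j:ℝ)/2*(1-r))/r) ⁻¹' A := by
  ext y
  simp only [Set.mem_image, Set.mem_preimage]
  constructor
  · rintro ⟨x, hx, rfl⟩
    have : (Smap r j x - (j:ℝ)/2*(1-r))/r = x := by
      unfold Smap; field_simp; ring
    rwa [this]
  · intro h
    exact ⟨_, h, by unfold Smap; field_simp; ring⟩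

lemma Smap_image_meas (r : ℝ) (hr0 : 0 < r) (j : Fin 3) {A : Set ℝ}
    (hA : MeasurableSet A) : MeasurableSet (Smap r j '' A) := by
  rw [Smap_image r hr0 j A]
  exact hA.preimage (by fun_prop)

lemma Smap_inj (r : ℝ) (hr0 : 0 < r) (j : Fin 3) : Function.Injective (Smap r j) := by
  intro x y h
  unfold Smap at h
  have : r * x = r * y := by linarith
  exact mul_left_cancel₀ hr0.ne' this

lemma Smap_disj (r : ℝ) (hr0 : 0 < r) (hr1 : r < 1/3) {i j : Fin 3} (hij : i ≠ j)
    {x y : ℝ} (hx : x ∈ Set.Icc (0:ℝ) 1) (hy : y ∈ Set.Icc (0:ℝ) 1) :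
    Smap r i x ≠ Smap r j y := by
  obtain ⟨hx0, hx1⟩ := hx
  obtain ⟨hy0, hy1⟩ := hy
  fin_cases i <;> fin_cases j <;>
    first
    | exact absurd rfl hij
    | (intro h; unfold Smap at h; norm_num at h ⊢; nlinarith)

section Main
variable (r : ℝ) (hr0 : 0 < r) (hr1 : r < 1/3)
  (P : Measure ℝ) [IsProbabilityMeasure P]
  (hP : P = (3 : ℝ≥0∞)⁻¹ •
      (P.map (Smap r 0) + P.map (Smap r 1) + P.map (Smap r 2)))
  (hsupp : P (Set.Icc (0:ℝ) 1)ᶜ = 0)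

include hr0 hr1 hP hsupp in
lemma restrict_image (j : Fin 3) (A : Set ℝ) (hA : MeasurableSet A)
    (hA1 : A ⊆ Set.Icc (0:ℝ) 1) :
    P.restrict (Smap r j '' A) = (3 : ℝ≥0∞)⁻¹ • (P.restrict A).map (Smap r j) := by
  ext B hB
  have himg : MeasurableSet (Smap r j '' A) := Smap_image_meas r hr0 j hA
  rw [Measure.restrict_apply hB, Measure.smul_apply,
    Measure.map_apply (Smap_meas r j) hB, Measure.restrict_apply (hB.preimage (Smap_meas r j))]
  have key : ∀ i : Fin 3, i ≠ j → P ((Smap r i) ⁻¹' (B ∩ Smap r j '' A)) = 0 := by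
    intro i hij
    apply measure_mono_null _ hsupp
    intro x hx
    simp only [Set.mem_preimage, Set.mem_inter_iff] at hx
    obtain ⟨a, ha, hax⟩ := hx.2
    intro hxI
    exact Smap_disj r hr0 hr1 hij hxI (hA1 ha) hax.symm
  have keyj : (Smap r j) ⁻¹' (B ∩ Smap r j '' A) = Smap r j ⁻¹' B ∩ A := by
    ext x
    simp only [Set.mem_preimage, Set.mem_inter_iff]
    constructor
    · rintro ⟨hxB, a, ha, hax⟩
      have hax' := Smap_inj r hr0 j hax
      exact ⟨hxB, by rwa [← hax']⟩
    · rintro ⟨hxB, hxA⟩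
      exact ⟨hxB, x, hxA, rfl⟩
  have expand : P (B ∩ Smap r j '' A)
      = (3:ℝ≥0∞)⁻¹ * ((P.map (Smap r 0)) (B ∩ Smap r j '' A)
        + (P.map (Smap r 1)) (B ∩ Smap r j '' A) + (P.map (Smap r 2)) (B ∩ Smap r j '' A)) := by
    conv_lhs => rw [hP]
    simp only [Measure.smul_apply, Measure.coe_add, Pi.add_apply, smul_eq_mul]
  have hmapeq : ∀ i : Fin 3, (P.map (Smap r i)) (B ∩ Smap r j '' A)
      = P ((Smap r i) ⁻¹' (B ∩ Smap r j '' A)) := fun i =>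
    Measure.map_apply (Smap_meas r i) (hB.inter himg)
  have hval : ∀ i : Fin 3, (P.map (Smap r i)) (B ∩ Smap r j '' A)
      = if i = j then P (Smap r j ⁻¹' B ∩ A) else 0 := by
    intro i
    rw [hmapeq i]
    by_cases h : i = j
    · subst h; rw [keyj, if_pos rfl]
    · rw [key i h, if_neg h]
  rw [expand, hval 0, hval 1, hval 2, smul_eq_mul]
  fin_cases j <;> simp

include hr0 hr1 hP hsupp in
lemma restrict_word (l : List (Fin 3)) :
    Measurable (fun x => l.foldr (fun j y => Smap r j y) x)
    ∧ MeasurableSet ((fun x => l.foldr (fun j y => Smap r j y) x) '' Set.Icc (0:ℝ) 1)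
    ∧ ((fun x => l.foldr (fun j y => Smap r j y) x) '' Set.Icc (0:ℝ) 1 ⊆ Set.Icc (0:ℝ) 1)
    ∧ P.restrict ((fun x => l.foldr (fun j y => Smap r j y) x) '' Set.Icc (0:ℝ) 1)
      = ((3 : ℝ≥0∞)⁻¹) ^ l.length • P.map (fun x => l.foldr (fun j y => Smap r j y) x) := by
  induction l with
  | nil =>
    refine ⟨measurable_id, ?_⟩
    simp only [List.foldr_nil, Set.image_id', List.length_nil, pow_zero, one_smul]
    refine ⟨measurableSet_Icc, subset_rfl, ?_⟩
    rw [show (fun x : ℝ => x) = id from rfl, Measure.map_id]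
    exact Measure.restrict_eq_self_of_ae_mem (by
      rw [MeasureTheory.ae_iff]
      convert hsupp using 2
      rfl)
  | cons j l ih =>
    obtain ⟨hFm, hFs, hFsub, hFres⟩ := ih
    have hcomp : (fun x => (j :: l).foldr (fun j y => Smap r j y) x)
        = (Smap r j) ∘ (fun x => l.foldr (fun j y => Smap r j y) x) := rfl
    have hm : Measurable (fun x => (j :: l).foldr (fun j y => Smap r j y) x) := by
      rw [hcomp]; exact (Smap_meas r j).comp hFm
    have himg : (fun x => (j :: l).foldr (fun j y => Smap r j y) x) '' Set.Icc (0:ℝ) 1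
        = Smap r j '' ((fun x => l.foldr (fun j y => Smap r j y) x) '' Set.Icc (0:ℝ) 1) := by
      rw [hcomp, Set.image_comp]
    refine ⟨hm, ?_, ?_, ?_⟩
    · rw [himg]; exact Smap_image_meas r hr0 j hFs
    · rw [himg]
      rintro y ⟨x, hx, rfl⟩
      exact Smap_mem r hr0 hr1 j (hFsub hx)
    · rw [himg, restrict_image r hr0 hr1 P hP hsupp j _ hFs hFsub, hFres,
        Measure.map_smul, Measure.map_map (Smap_meas r j) hFm]
      rw [smul_smul, List.length_cons, pow_succ, hcomp]
      ring_nf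

include hsupp in
lemma integ_bound (f : ℝ → ℝ) (hf : Measurable f) (C : ℝ)
    (hb : ∀ x ∈ Set.Icc (0:ℝ) 1, |f x| ≤ C) : Integrable f P := by
  have haem : ∀ᵐ x ∂P, x ∈ Set.Icc (0:ℝ) 1 := by
    rw [MeasureTheory.ae_iff]; convert hsupp using 2; rfl
  refine (integrable_const C).mono' hf.aestronglyMeasurable ?_
  exact haem.mono fun x hx => by rw [Real.norm_eq_abs]; exact hb x hx

include hr0 hr1 hP hsupp in
lemma int_fixed (f : ℝ → ℝ) (hf : Measurable f) (C : ℝ)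
    (hb : ∀ x ∈ Set.Icc (0:ℝ) 1, |f x| ≤ C) :
    ∫ x, f x ∂P = (1/3) * (∫ x, f (Smap r 0 x) ∂P + ∫ x, f (Smap r 1 x) ∂P
      + ∫ x, f (Smap r 2 x) ∂P) := by
  have hint : ∀ j : Fin 3, Integrable f (P.map (Smap r j)) := by
    intro j
    rw [integrable_map_measure hf.aestronglyMeasurable (Smap_meas r j).aemeasurable]
    exact integ_bound P hsupp (f ∘ Smap r j) (hf.comp (Smap_meas r j)) C
      (fun x hx => hb _ (Smap_mem r hr0 hr1 j hx))
  conv_lhs => rw [hP]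
  rw [integral_smul_measure, integral_add_measure ((hint 0).add_measure (hint 1)) (hint 2),
      integral_add_measure (hint 0) (hint 1),
      integral_map (Smap_meas r 0).aemeasurable hf.aestronglyMeasurable,
      integral_map (Smap_meas r 1).aemeasurable hf.aestronglyMeasurable,
      integral_map (Smap_meas r 2).aemeasurable hf.aestronglyMeasurable]
  rw [smul_eq_mul]
  norm_num

include hsupp in
lemma integ_affine_sq (a b : ℝ) : Integrable (fun x => (a*x+b)^2) P := by
  refine integ_bound P hsupp _ (by fun_prop) ((|a|+|b|)^2) ?_
  intro x ⟨hx0, hx1⟩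
  have h1 : |a*x+b| ≤ |a| + |b| := by
    refine (abs_add_le _ _).trans ?_
    rw [abs_mul]
    have : |a| * |x| ≤ |a| * 1 := by
      apply mul_le_mul_of_nonneg_left _ (abs_nonneg a)
      rw [abs_le]; constructor <;> linarith
    linarith
  rw [abs_pow]
  exact pow_le_pow_left₀ (abs_nonneg _) h1 2

include hsupp in
lemma integ_id : Integrable (fun x : ℝ => x) P := by
  refine integ_bound P hsupp _ measurable_id 1 ?_
  intro x ⟨hx0, hx1⟩
  rw [abs_le]; constructor <;> linarith

include hsupp in
lemma integ_sq : Integrable (fun x : ℝ => x^2) P := by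
  refine integ_bound P hsupp _ (by fun_prop) 1 ?_
  intro x ⟨hx0, hx1⟩
  rw [abs_le]
  constructor
  · show (-1:ℝ) ≤ x^2; nlinarith
  · show x^2 ≤ (1:ℝ); nlinarith

include hr0 hr1 hP hsupp in
lemma int_affine (a b : ℝ) :
    ∫ x, (a * x + b) ∂P = a * (∫ x, x ∂P) + b := by
  rw [integral_add ((integ_id P hsupp).const_mul a) (integrable_const b),
    integral_const_mul, integral_const]
  simp

include hr0 hr1 hP hsupp in
lemma mean_eq : ∫ x, x ∂P = 1/2 := by
  have h := int_fixed r hr0 hr1 P hP hsupp (fun x => x) measurable_id 1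
    (fun x hx => by rw [abs_le]; exact ⟨by linarith [hx.1], hx.2⟩)
  simp only [Smap] at h
  rw [int_affine r hr0 hr1 P hP hsupp, int_affine r hr0 hr1 P hP hsupp,
    int_affine r hr0 hr1 P hP hsupp] at h
  have c0 : ((0 : Fin 3) : ℝ) = 0 := by norm_num
  have c1 : ((1 : Fin 3) : ℝ) = 1 := by norm_num
  have c2 : ((2 : Fin 3) : ℝ) = 2 := by norm_num
  rw [c0, c1, c2] at h
  set I := ∫ x, x ∂P
  have h2 : (1 - r) * I = (1 - r) * (1/2) := by linear_combination h
  have : (1 - r) ≠ 0 := by linarith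
  exact mul_left_cancel₀ this h2

include hr0 hr1 hP hsupp in
lemma int_affine_sq (a b : ℝ) :
    ∫ x, (a * x + b)^2 ∂P = a^2 * (∫ x, x^2 ∂P) + 2*a*b * (∫ x, x ∂P) + b^2 := by
  have hfe : (fun x => (a*x+b)^2) = fun x => a^2 * x^2 + ((2*a*b) * x + b^2) := by
    funext x; ring
  rw [hfe, integral_add ((integ_sq P hsupp).const_mul _)
      (show Integrable (fun x => 2*a*b*x + b^2) P from
        ((integ_id P hsupp).const_mul _).add (integrable_const _)),
    integral_add ((integ_id P hsupp).const_mul _) (integrable_const _),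
    integral_const_mul, integral_const_mul, integral_const]
  simp
  ring

include hr0 hr1 hP hsupp in
lemma sq_eq : ∫ x, x^2 ∂P = (5+r)/(12*(1+r)) := by
  have h := int_fixed r hr0 hr1 P hP hsupp (fun x => x^2) (by fun_prop) 1
    (fun x hx => by
      have h1 := hx.1; have h2 := hx.2
      rw [abs_le]
      constructor
      · show (-1:ℝ) ≤ x^2; nlinarith
      · show x^2 ≤ (1:ℝ); nlinarith)
  simp only [Smap] at h
  rw [show ∀ c : ℝ, (fun x => (r * x + c)^2) = (fun x => (r*x+c)^2) from fun c => rfl] at h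
  rw [int_affine_sq r hr0 hr1 P hP hsupp, int_affine_sq r hr0 hr1 P hP hsupp,
    int_affine_sq r hr0 hr1 P hP hsupp, mean_eq r hr0 hr1 P hP hsupp] at h
  have c0 : ((0 : Fin 3) : ℝ) = 0 := by norm_num
  have c1 : ((1 : Fin 3) : ℝ) = 1 := by norm_num
  have c2 : ((2 : Fin 3) : ℝ) = 2 := by norm_num
  rw [c0, c1, c2] at h
  set I := ∫ x, x^2 ∂P
  have h2 : (1 - r^2) * I = (1 - r) * (5 + r) / 12 := by linear_combination h
  have hne : (1 - r^2) ≠ 0 := by nlinarith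
  have h3 : (1 - r^2) * I = (1 - r^2) * ((5+r)/(12*(1+r))) := by
    rw [h2]
    have : (1:ℝ) + r ≠ 0 := by linarith
    field_simp
    ring
  exact mul_left_cancel₀ hne h3

include hr0 hr1 hP hsupp in
lemma moment_quad (a b : ℝ) :
    ∫ x, (a * x + b)^2 ∂P = a^2 * ((1-r)/(6*(r+1))) + (a/2 + b)^2 := by
  rw [int_affine_sq r hr0 hr1 P hP hsupp, mean_eq r hr0 hr1 P hP hsupp,
    sq_eq r hr0 hr1 P hP hsupp]
  have h1 : (1:ℝ) + r ≠ 0 := by linarith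
  field_simp
  ring

end Main

theorem stmt_4 (r : ℝ) (hr0 : 0 < r) (hr1 : r < 1/3)
    (P : Measure ℝ) [IsProbabilityMeasure P]
    (hP : P = (3 : ℝ≥0∞)⁻¹ •
      (P.map (Smap r 0) + P.map (Smap r 1) + P.map (Smap r 2)))
    (k : ℕ) (hk : 1 ≤ k) (σ : Fin k → Fin 3) (x₀ : ℝ) :
    ∫ x in Sword r σ '' Set.Icc (0 : ℝ) 1, (x - x₀)^2 ∂P =
      ((3 : ℝ)^k)⁻¹ * (r^(2*k) * ((1 - r) / (6 * (r + 1))) + (Sword r σ (1/2) - x₀)^2) := by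
  have hsupp : P (Set.Icc (0:ℝ) 1)ᶜ = 0 := by
    have h := supp_lemma r hr0 hr1 P hP
    rw [MeasureTheory.ae_iff] at h
    convert h using 2
    rfl
  set l := List.ofFn σ with hl
  obtain ⟨hFm, hFs, hFsub, hFres⟩ := restrict_word r hr0 hr1 P hP hsupp l
  have hlen : l.length = k := by rw [hl, List.length_ofFn]
  have hJ : Sword r σ '' Set.Icc (0 : ℝ) 1
      = (fun x => l.foldr (fun j y => Smap r j y) x) '' Set.Icc (0:ℝ) 1 := rfl
  rw [hJ, hFres, integral_smul_measure,
    integral_map hFm.aemeasurable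
      ((by fun_prop : Measurable fun y : ℝ => (y - x₀)^2).aestronglyMeasurable)]
  have hint : (fun x => (l.foldr (fun j y => Smap r j y) x - x₀)^2)
      = fun x => (r^k * x + (l.foldr (fun j y => Smap r j y) 0 - x₀))^2 := by
    funext x
    rw [foldr_affine, hlen]
    ring
  rw [hint, moment_quad r hr0 hr1 P hP hsupp]
  have hhalf : Sword r σ (1/2) = r^k * (1/2) + l.foldr (fun j y => Smap r j y) 0 := by
    unfold Sword
    rw [← hl, foldr_affine, hlen]
  rw [hhalf]
  have htr : (((3:ℝ≥0∞)⁻¹) ^ l.length).toReal = ((3:ℝ)^k)⁻¹ := by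
    rw [hlen, ENNReal.toReal_pow, ENNReal.toReal_inv, ← inv_pow]
    norm_num
  rw [htr, smul_eq_mul]
  have hpow : r^(2*k) = (r^k)^2 := by rw [two_mul, pow_add]; ring
  rw [hpow]
  ring
end

section
/- For r ∈ (0, 1/3), define f(r) = −(3r³ − 3r² + r − 1)/(24(r+1)) and g(r) = −(3r⁵ + 15r⁴ + 6r³ − 42r² + 31r − 13)/(240(r+1)). Then there is a unique r₀ ∈ (0, 1/3) with f(r₀) = g(r₀); moreover f(r) < g(r) for r < r₀ and f(r) > g(r) for r > r₀ in (0, 1/3), and r₀ ∈ (0.16227766, 0.16227767). -/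
open Set

theorem stmt_10
    (f g : ℝ → ℝ)
    (hf : ∀ r : ℝ, f r = -(3*r^3 - 3*r^2 + r - 1) / (24 * (r + 1)))
    (hg : ∀ r : ℝ, g r = -(3*r^5 + 15*r^4 + 6*r^3 - 42*r^2 + 31*r - 13) / (240 * (r + 1))) :
    ∃ r₀ ∈ Ioo (0 : ℝ) (1/3),
      f r₀ = g r₀ ∧
      (∀ r ∈ Ioo (0 : ℝ) (1/3), f r = g r → r = r₀) ∧
      (∀ r ∈ Ioo (0 : ℝ) (1/3), r < r₀ → f r < g r) ∧
      (∀ r ∈ Ioo (0 : ℝ) (1/3), r₀ < r → f r > g r) ∧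
      r₀ ∈ Ioo (0.16227766 : ℝ) 0.16227767 := by
  have hs : Real.sqrt 10 ^ 2 = 10 := Real.sq_sqrt (by norm_num)
  have hs0 : (3.16227766 : ℝ) < Real.sqrt 10 := by
    nlinarith [hs, Real.sqrt_nonneg 10]
  have hs1 : Real.sqrt 10 < 3.16227767 := by
    nlinarith [hs, Real.sqrt_nonneg 10]
  set r₀ : ℝ := Real.sqrt 10 - 3 with hr₀
  have hzero : r₀ ^ 2 + 6 * r₀ - 1 = 0 := by
    have : (r₀ + 3) ^ 2 = 10 := by rw [hr₀]; ring_nf; nlinarith [hs]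
    nlinarith [this]
  have key : ∀ r : ℝ, r ∈ Ioo (0 : ℝ) (1/3) →
      g r - f r = -(r ^ 2 + 6 * r - 1) * (r - 1) ^ 2 / 80 := by
    intro r hr
    have h1 : r + 1 ≠ 0 := by have := hr.1; linarith
    rw [hf, hg]
    field_simp
    ring
  have hr₀mem : r₀ ∈ Ioo (0 : ℝ) (1/3) := by
    constructor <;> [nlinarith; nlinarith]
  refine ⟨r₀, hr₀mem, ?_, ?_, ?_, ?_, ⟨by linarith, by linarith⟩⟩
  · have := key r₀ hr₀mem
    rw [hzero] at this
    linarith [this]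
  · intro r hr hfg
    have h := key r hr
    rw [hfg, sub_self] at h
    have h2 : (r ^ 2 + 6 * r - 1) * (r - 1) ^ 2 = 0 := by linarith
    have h3 : (0:ℝ) < (r - 1) ^ 2 := by nlinarith [hr.2]
    have h4 : r ^ 2 + 6 * r - 1 = 0 := by
      rcases mul_eq_zero.mp h2 with h | h
      · linarith
      · nlinarith
    have h5 : (r + 3 - Real.sqrt 10) * (r + 3 + Real.sqrt 10) = 0 := by
      nlinarith [hs]
    rcases mul_eq_zero.mp h5 with h | h
    · rw [hr₀]; linarith
    · exfalso; nlinarith [hr.1]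
  · intro r hr hlt
    have h := key r hr
    have hA : 0 < -(r ^ 2 + 6 * r - 1) := by
      nlinarith [hzero, mul_pos (sub_pos.mpr hlt)
        (show (0:ℝ) < r + 6 + r₀ by nlinarith [hr.1, hr₀mem.1])]
    have hsq : (0:ℝ) < (r - 1) ^ 2 := by nlinarith [hr.2]
    nlinarith [mul_pos hA hsq]
  · intro r hr hlt
    have h := key r hr
    have hA : 0 < r ^ 2 + 6 * r - 1 := by
      nlinarith [hzero, mul_pos (sub_pos.mpr hlt)
        (show (0:ℝ) < r + 6 + r₀ by nlinarith [hr.1, hr₀mem.1])]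
    have hsq : (0:ℝ) < (r - 1) ^ 2 := by nlinarith [hr.2]
    nlinarith [mul_pos hA hsq]
end

section
/- For r ∈ (0, 1/3), define g(r) = −(3r⁵ + 15r⁴ + 6r³ − 42r² + 31r − 13)/(240(r+1)) and h(r) = −(3r⁷ + 15r⁶ + 60r⁵ + 66r⁴ + 18r³ − 324r² + 283r − 121)/(2184(r+1)). Then there is a unique r₁ ∈ (0, 1/3) with g(r₁) = h(r₁), and r₁ ∈ (0.23176263, 0.23176264). -/
open Set

noncomputable def Pq : ℝ → ℝ := fun r =>
  30*r^7 + 150*r^6 + 327*r^5 - 705*r^4 - 366*r^3 + 582*r^2 + 9*r - 27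

lemma Pq_mono : StrictMonoOn Pq (Icc (0:ℝ) (1/3)) := by
  intro a ha b hb hab
  obtain ⟨ha0, ha1⟩ := ha
  obtain ⟨hb0, hb1⟩ := hb
  have h1 : 0 < b - a := by linarith
  have h3a : 0 ≤ 1 - 3*a := by linarith
  have h3b : 0 ≤ 1 - 3*b := by linarith
  simp only [Pq]
  nlinarith [h1, mul_nonneg h1.le (mul_nonneg ha0 h3a), mul_nonneg h1.le (mul_nonneg hb0 h3b),
    mul_nonneg h1.le (mul_nonneg (mul_nonneg ha0 hb0) h3a),
    mul_nonneg h1.le (mul_nonneg (mul_nonneg ha0 hb0) h3b),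
    mul_nonneg h1.le (mul_nonneg (mul_nonneg ha0 ha0) h3a),
    mul_nonneg h1.le (mul_nonneg (mul_nonneg hb0 hb0) h3b),
    mul_nonneg h1.le (mul_nonneg (mul_nonneg ha0 ha0) h3b),
    mul_nonneg h1.le (mul_nonneg (mul_nonneg hb0 hb0) h3a),
    mul_nonneg h1.le (mul_nonneg h3a h3b),
    mul_nonneg (mul_nonneg ha0 hb0) (mul_nonneg h3a h3b),
    sq_nonneg (a-b), sq_nonneg (a+b), mul_nonneg ha0 hb0,
    mul_nonneg h1.le (mul_nonneg (mul_nonneg (mul_nonneg ha0 hb0) ha0) hb0),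
    mul_nonneg h1.le (mul_nonneg (mul_nonneg (mul_nonneg ha0 ha0) ha0) h3a),
    mul_nonneg h1.le (mul_nonneg (mul_nonneg (mul_nonneg hb0 hb0) hb0) h3b)]

lemma Pq_cont : ContinuousOn Pq (Icc (0.23176263:ℝ) 0.23176264) := by
  apply Continuous.continuousOn
  unfold Pq
  continuity

theorem stmt_11
    (g h : ℝ → ℝ)
    (hg : ∀ r : ℝ, g r = -(3*r^5 + 15*r^4 + 6*r^3 - 42*r^2 + 31*r - 13) / (240 * (r + 1)))
    (hh : ∀ r : ℝ, h r = -(3*r^7 + 15*r^6 + 60*r^5 + 66*r^4 + 18*r^3 - 324*r^2 + 283*r - 121)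
      / (2184 * (r + 1))) :
    ∃ r₁ ∈ Ioo (0 : ℝ) (1/3),
      g r₁ = h r₁ ∧
      (∀ r ∈ Ioo (0 : ℝ) (1/3), g r = h r → r = r₁) ∧
      r₁ ∈ Ioo (0.23176263 : ℝ) 0.23176264 := by
  have hlo : Pq (0.23176263:ℝ) < 0 := by unfold Pq; norm_num
  have hhi : Pq (0.23176264:ℝ) > 0 := by unfold Pq; norm_num
  have hiv := intermediate_value_Ioo (by norm_num : (0.23176263:ℝ) ≤ 0.23176264) Pq_cont
  have h0mem : (0:ℝ) ∈ Ioo (Pq 0.23176263) (Pq 0.23176264) := ⟨hlo, hhi⟩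
  obtain ⟨r₁, hr₁mem, hr₁val⟩ := hiv h0mem
  have hr₁Ioo : r₁ ∈ Ioo (0:ℝ) (1/3) := ⟨by linarith [hr₁mem.1], by linarith [hr₁mem.2]⟩
  have key : ∀ r : ℝ, r ∈ Ioo (0:ℝ) (1/3) → (g r = h r ↔ Pq r = 0) := by
    intro r hr
    have hr1 : (240:ℝ) * (r + 1) ≠ 0 := by nlinarith [hr.1]
    have hr2 : (2184:ℝ) * (r + 1) ≠ 0 := by nlinarith [hr.1]
    rw [hg, hh, div_eq_div_iff hr1 hr2]
    have hne : (24:ℝ) * (r + 1) ≠ 0 := by nlinarith [hr.1]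
    constructor
    · intro hE
      have h24 : 24 * (r + 1) * Pq r = 0 := by unfold Pq; linear_combination hE
      exact (mul_eq_zero.1 h24).resolve_left hne
    · intro hE; unfold Pq at hE; linear_combination (24 * (r + 1)) * hE
  refine ⟨r₁, hr₁Ioo, (key r₁ hr₁Ioo).2 hr₁val, ?_, hr₁mem⟩
  intro r hr hgr
  have hPr : Pq r = 0 := (key r hr).1 hgr
  have hrIcc : r ∈ Icc (0:ℝ) (1/3) := ⟨le_of_lt hr.1, le_of_lt hr.2⟩
  have hr₁Icc : r₁ ∈ Icc (0:ℝ) (1/3) := ⟨le_of_lt hr₁Ioo.1, le_of_lt hr₁Ioo.2⟩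
  rcases lt_trichotomy r r₁ with hlt | heq | hgt
  · have := Pq_mono hrIcc hr₁Icc hlt; rw [hPr, hr₁val] at this; linarith
  · exact heq
  · have := Pq_mono hr₁Icc hrIcc hgt; rw [hPr, hr₁val] at this; linarith
end
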